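/- If p ∈ ℝ⟨x⟩ satisfies p = ℓ + Σⱼ sⱼ* sⱼ where ℓ is a symmetric polynomial homogeneous of degree one and s₁,…,s_m are polynomials homogeneous of degree one, then p is symmetric, p(0) = 0, and p is quasi-convex: for every positive integer n and every positive definite A ∈ 𝕊ₙ(ℝ), the set {X ∈ 𝕊ₙ(ℝ^g) : A − p(X) is positive definite} is convex. -/

import Mathlib

open scoped BigOperators

noncomputable section

/-- Evaluation of a free polynomial `p ∈ ℝ⟨x₁,…,x_g⟩` at a `g`-tuple of square matrices;
the empty word evaluates to the identity matrix. -/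
def evalMat {g : ℕ} {ι : Type} [Fintype ι] [DecidableEq ι]
    (p : FreeAlgebra ℝ (Fin g)) (X : Fin g → Matrix ι ι ℝ) : Matrix ι ι ℝ :=
  FreeAlgebra.lift ℝ X p

/-- `p` is a hermitian sum of squares: `p = Σⱼ hⱼ* hⱼ`. -/
def IsHermitianSOS {g : ℕ} (p : FreeAlgebra ℝ (Fin g)) : Prop :=
  ∃ (m : ℕ) (h : Fin m → FreeAlgebra ℝ (Fin g)), p = ∑ j, star (h j) * h j

/-- `p` is quasi-convex: `p(0) = 0` and for every positive integer `n` and every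
positive definite `A ∈ 𝕊ₙ(ℝ)`, the set `{X ∈ 𝕊ₙ(ℝ^g) : A − p(X) ≻ 0}` is convex. -/
def IsQuasiConvex {g : ℕ} (p : FreeAlgebra ℝ (Fin g)) : Prop :=
  (∀ n : ℕ, evalMat p (fun _ => (0 : Matrix (Fin n) (Fin n) ℝ)) = 0) ∧
  ∀ n : ℕ, 0 < n → ∀ A : Matrix (Fin n) (Fin n) ℝ, A.PosDef →
    Convex ℝ {X : Fin g → Matrix (Fin n) (Fin n) ℝ |
      (∀ j, (X j).IsSymm) ∧ (A - evalMat p X).PosDef}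

/-- The space of free polynomials homogeneous of degree one (linear span of the variables).  -/
def degOne (g : ℕ) : Submodule ℝ (FreeAlgebra ℝ (Fin g)) :=
  Submodule.span ℝ (Set.range (FreeAlgebra.ι ℝ : Fin g → FreeAlgebra ℝ (Fin g)))

/-- The space of free polynomials of degree at most `k`. -/
def degLE (g k : ℕ) : Submodule ℝ (FreeAlgebra ℝ (Fin g)) :=
  ⨆ i ∈ Finset.range (k + 1), (degOne g) ^ i

/-- `M` has a positive eigenvalue (with corresponding eigenvector). -/
def HasPosEigenvalue {n : ℕ} (M : Matrix (Fin n) (Fin n) ℝ) : Prop :=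
  ∃ (lam : ℝ) (v : Fin n → ℝ), 0 < lam ∧ v ≠ 0 ∧ M.mulVec v = lam • v

/-- The directional derivative `p′(X)[H]`: the coefficient of `t` in `t ↦ p(X + tH)`. -/
def derivEval {g n : ℕ} (p : FreeAlgebra ℝ (Fin g))
    (X H : Fin g → Matrix (Fin n) (Fin n) ℝ) : Matrix (Fin n) (Fin n) ℝ :=
  (FreeAlgebra.lift ℝ
      (fun j => Polynomial.C (X j) + Polynomial.X * Polynomial.C (H j)) p).coeff 1

/-- The Hessian `p″(X)[H]`: twice the coefficient of `t²` in `t ↦ p(X + tH)`. -/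
def hessEval {g n : ℕ} (p : FreeAlgebra ℝ (Fin g))
    (X H : Fin g → Matrix (Fin n) (Fin n) ℝ) : Matrix (Fin n) (Fin n) ℝ :=
  (2 : ℝ) • (FreeAlgebra.lift ℝ
      (fun j => Polynomial.C (X j) + Polynomial.X * Polynomial.C (H j)) p).coeff 2

/-- The constant term of a free polynomial (so that `p(0)` is `constantTerm p` times the
identity matrix). -/
def constantTerm {g : ℕ} (p : FreeAlgebra ℝ (Fin g)) : ℝ :=
  FreeAlgebra.lift ℝ (fun _ : Fin g => (0 : ℝ)) p

/-- Evaluation of a word `w = x_{j₁}⋯x_{j_k}` at a tuple of matrices: `X_{j₁}⋯X_{j_k}`. -/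
def wordEval {g n : ℕ} (X : Fin g → Matrix (Fin n) (Fin n) ℝ)
    (w : FreeMonoid (Fin g)) : Matrix (Fin n) (Fin n) ℝ :=
  (w.toList.map X).prod

lemma star_degOne {g : ℕ} {q : FreeAlgebra ℝ (Fin g)} (hq : q ∈ degOne g) : star q = q := by
  induction hq using Submodule.span_induction with
  | mem x hx => obtain ⟨i, rfl⟩ := hx; exact FreeAlgebra.star_ι i
  | zero => simp
  | add x y _ _ hx hy => simp [hx, hy]
  | smul a x _ hx =>
      rw [Algebra.smul_def, star_mul, hx, FreeAlgebra.star_algebraMap,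
        ← Algebra.commutes, ← Algebra.smul_def]

lemma evalMat_degOne_zero {g n : ℕ} {q : FreeAlgebra ℝ (Fin g)} (hq : q ∈ degOne g) :
    evalMat q (fun _ => (0 : Matrix (Fin n) (Fin n) ℝ)) = 0 := by
  induction hq using Submodule.span_induction with
  | mem x hx => obtain ⟨i, rfl⟩ := hx; simp [evalMat]
  | zero => simp [evalMat]
  | add x y _ _ hx hy => simp [evalMat, map_add] at *; simp [hx, hy]
  | smul a x _ hx => simp [evalMat, map_smul] at *; simp [hx]

lemma evalMat_degOne_comb {g n : ℕ} {q : FreeAlgebra ℝ (Fin g)} (hq : q ∈ degOne g)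
    (X Y : Fin g → Matrix (Fin n) (Fin n) ℝ) (a b : ℝ) :
    evalMat q (fun j => a • X j + b • Y j) = a • evalMat q X + b • evalMat q Y := by
  induction hq using Submodule.span_induction with
  | mem x hx => obtain ⟨i, rfl⟩ := hx; simp [evalMat]
  | zero => simp [evalMat]
  | add x y _ _ hx hy =>
      simp only [evalMat, map_add] at *
      rw [hx, hy]; module
  | smul c x _ hx =>
      simp only [evalMat, map_smul] at *
      rw [hx]; module

lemma evalMat_degOne_symm {g n : ℕ} {q : FreeAlgebra ℝ (Fin g)} (hq : q ∈ degOne g)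
    {X : Fin g → Matrix (Fin n) (Fin n) ℝ} (hX : ∀ j, (X j).IsSymm) :
    (evalMat q X).IsSymm := by
  induction hq using Submodule.span_induction with
  | mem x hx => obtain ⟨i, rfl⟩ := hx; simpa [evalMat] using hX i
  | zero => simp [evalMat, Matrix.IsSymm]
  | add x y _ _ hx hy => simp only [evalMat, map_add] at *; exact hx.add hy
  | smul c x _ hx => simp only [evalMat, map_smul] at *; exact hx.smul c

lemma psd_smul {n : ℕ} {M : Matrix (Fin n) (Fin n) ℝ} (hM : M.PosSemidef) {c : ℝ} (hc : 0 ≤ c) :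
    (c • M).PosSemidef := by
  refine ⟨?_, fun x => ?_⟩
  · simp only [Matrix.IsHermitian, Matrix.conjTranspose_smul, star_trivial, hM.1.eq]
  · exact (hM.smul hc).2 x

lemma pd_smul {n : ℕ} {M : Matrix (Fin n) (Fin n) ℝ} (hM : M.PosDef) {c : ℝ} (hc : 0 < c) :
    (c • M).PosDef := by
  refine ⟨?_, fun x hx => ?_⟩
  · simp only [Matrix.IsHermitian, Matrix.conjTranspose_smul, star_trivial, hM.1.eq]
  · exact (hM.smul hc).2 hx

lemma pd_comb {n : ℕ} {P Q : Matrix (Fin n) (Fin n) ℝ} (hP : P.PosDef) (hQ : Q.PosDef)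
    {a b : ℝ} (ha : 0 ≤ a) (hb : 0 ≤ b) (hab : a + b = 1) : (a • P + b • Q).PosDef := by
  rcases ha.lt_or_eq with ha' | ha'
  · exact (pd_smul hP ha').add_posSemidef (psd_smul hQ.posSemidef hb)
  · have hb1 : b = 1 := by linarith
    subst hb1; rw [← ha']
    simpa using hQ

lemma psd_square {n : ℕ} {M : Matrix (Fin n) (Fin n) ℝ} (hM : M.IsSymm) :
    (M * M).PosSemidef := by
  have : M.conjTranspose = M := by rw [Matrix.conjTranspose_eq_transpose_of_trivial, hM.eq]
  have h2 := Matrix.posSemidef_conjTranspose_mul_self M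
  rwa [this] at h2

lemma key_identity {n : ℕ} (a : ℝ) (M N : Matrix (Fin n) (Fin n) ℝ) :
    a • (M * M) + (1 - a) • (N * N) - (a • M + (1 - a) • N) * (a • M + (1 - a) • N)
      = (a * (1 - a)) • ((M - N) * (M - N)) := by
  simp only [add_mul, mul_add, sub_mul, mul_sub, Matrix.smul_mul, Matrix.mul_smul, smul_smul,
    smul_sub, smul_add]
  module

lemma psd_sum {n m : ℕ} (f : Fin m → Matrix (Fin n) (Fin n) ℝ)
    (h : ∀ j, (f j).PosSemidef) : (∑ j, f j).PosSemidef :=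
  Finset.sum_induction f _ (fun _ _ hu hv => hu.add hv) Matrix.PosSemidef.zero (fun j _ => h j)

theorem stmt_2' (g : ℕ) (p l : FreeAlgebra ℝ (Fin g)) (m : ℕ)
    (s : Fin m → FreeAlgebra ℝ (Fin g))
    (hl : l ∈ degOne g) (hlsym : star l = l) (hs : ∀ j, s j ∈ degOne g)
    (hp : p = l + ∑ j, star (s j) * s j) :
    star p = p ∧
    (∀ n : ℕ, evalMat p (fun _ => (0 : Matrix (Fin n) (Fin n) ℝ)) = 0) ∧
    (∀ n : ℕ, 0 < n → ∀ A : Matrix (Fin n) (Fin n) ℝ, A.PosDef →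
      Convex ℝ {X : Fin g → Matrix (Fin n) (Fin n) ℝ |
        (∀ j, (X j).IsSymm) ∧ (A - evalMat p X).PosDef}) := by
  have hexp : ∀ {n : ℕ} (X : Fin g → Matrix (Fin n) (Fin n) ℝ),
      evalMat p X = evalMat l X + ∑ j, evalMat (s j) X * evalMat (s j) X := by
    intro n X
    rw [hp]
    simp only [evalMat, map_add, map_sum, map_mul]
    congr 1
    refine Finset.sum_congr rfl fun j _ => ?_
    rw [star_degOne (hs j)]
  refine ⟨?_, ?_, ?_⟩
  · subst hp
    rw [star_add, hlsym, star_sum]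
    congr 1
    refine Finset.sum_congr rfl fun j _ => ?_
    rw [star_mul, star_star]
  · intro n
    rw [hexp, evalMat_degOne_zero hl]
    have : ∀ j : Fin m, evalMat (s j)
        (fun _ => (0 : Matrix (Fin n) (Fin n) ℝ)) = 0 := fun j => evalMat_degOne_zero (hs j)
    simp [this]
  · intro n hn A hA
    rintro X ⟨hXs, hXpd⟩ Y ⟨hYs, hYpd⟩ a b ha hb hab
    have hb' : b = 1 - a := by linarith
    subst hb'
    have hZ : a • X + (1 - a) • Y = fun j => a • X j + (1 - a) • Y j := rfl
    set Mx : Fin m → Matrix (Fin n) (Fin n) ℝ := fun j => evalMat (s j) X with hMx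
    set My : Fin m → Matrix (Fin n) (Fin n) ℝ := fun j => evalMat (s j) Y with hMy
    constructor
    · intro j
      rw [hZ]
      exact ((hXs j).smul a).add ((hYs j).smul (1 - a))
    · rw [hZ]
      have h2 : ∑ j, evalMat (s j) (fun j => a • X j + (1 - a) • Y j) *
          evalMat (s j) (fun j => a • X j + (1 - a) • Y j)
          = ∑ j, (a • Mx j + (1 - a) • My j) * (a • Mx j + (1 - a) • My j) :=
        Finset.sum_congr rfl fun j _ => by rw [evalMat_degOne_comb (hs j)]
      have hsum : ∑ j, (a • Mx j + (1 - a) • My j) * (a • Mx j + (1 - a) • My j)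
          = a • ∑ j, Mx j * Mx j + (1 - a) • ∑ j, My j * My j
            - ∑ j, (a * (1 - a)) • ((Mx j - My j) * (Mx j - My j)) := by
        rw [Finset.smul_sum, Finset.smul_sum, ← Finset.sum_add_distrib,
          ← Finset.sum_sub_distrib]
        refine Finset.sum_congr rfl fun j _ => ?_
        rw [← key_identity a (Mx j) (My j)]
        abel
      have hid : A - evalMat p (fun j => a • X j + (1 - a) • Y j)
          = a • (A - evalMat p X) + (1 - a) • (A - evalMat p Y)
            + ∑ j, (a * (1 - a)) • ((Mx j - My j) * (Mx j - My j)) := by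
        rw [hexp, hexp, hexp, evalMat_degOne_comb hl X Y a (1 - a), h2, hsum]
        module
      rw [hid]
      refine (pd_comb ?_ ?_ ha hb hab).add_posSemidef ?_
      · exact hXpd
      · exact hYpd
      · refine psd_sum _ fun j => psd_smul (psd_square ?_) (mul_nonneg ha hb)
        exact (evalMat_degOne_symm (hs j) hXs).sub (evalMat_degOne_symm (hs j) hYs)

/-- If `p = ℓ + Σⱼ sⱼ* sⱼ` with `ℓ` symmetric homogeneous of degree one and the
`sⱼ` homogeneous of degree one, then `p` is symmetric, `p(0) = 0`, and `p` is quasi-convex. -/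
theorem stmt_2 (g : ℕ) (p l : FreeAlgebra ℝ (Fin g)) (m : ℕ)
    (s : Fin m → FreeAlgebra ℝ (Fin g))
    (hl : l ∈ degOne g) (hlsym : star l = l) (hs : ∀ j, s j ∈ degOne g)
    (hp : p = l + ∑ j, star (s j) * s j) :
    star p = p ∧
    (∀ n : ℕ, evalMat p (fun _ => (0 : Matrix (Fin n) (Fin n) ℝ)) = 0) ∧
    (∀ n : ℕ, 0 < n → ∀ A : Matrix (Fin n) (Fin n) ℝ, A.PosDef →
      Convex ℝ {X : Fin g → Matrix (Fin n) (Fin n) ℝ |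
        (∀ j, (X j).IsSymm) ∧ (A - evalMat p X).PosDef}) :=
  stmt_2' g p l m s hl hlsym hs hp
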